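/- arXiv:1312.4088 — 3 statements merged into one kernel-verified Lean document; each statement's English description precedes it below -/
import Mathlib

section
/- Define J(0) = 0 and J(l) = inf{n > J(l-1) : V_{n+1} > n(μ-ε)} for i.i.d. nonnegative random variables V_n with E[V_1] < ∞, and let γ = inf{l ≥ 1 : J(l) = ∞}. Then γ is stochastically dominated by a geometric random variable with success probability exp(-c E[V_1]/(μ-ε)) for some constant c > 0; in particular E[γ] ≤ exp(c E[V_1]/(μ-ε)) < ∞. -/
open MeasureTheory ProbabilityTheory Filter Set
open scoped ENNReal NNReal Topology

/-- The number `γ` of finite record times `J l` along the boundary `n (μ - ε)` is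
stochastically dominated by a geometric random variable with success probability
`exp(-c E V / (μ - ε))`; in particular `E γ ≤ exp(c E V / (μ - ε))`. -/
theorem stmt4 {Ω : Type*} [MeasureSpace Ω] [IsProbabilityMeasure (ℙ : Measure Ω)]
    (V : ℕ → Ω → ℝ) (hmeas : ∀ n, Measurable (V n))
    (hnonneg : ∀ n ω, 0 ≤ V n ω)
    (hindep : iIndepFun V ℙ)
    (hident : ∀ n, Measure.map (V n) ℙ = Measure.map (V 1) ℙ)
    (hint : Integrable (V 1) ℙ)
    (μ ε : ℝ) (h : 0 < μ - ε)
    (hp1 : (ℙ {ω | (1 : ℝ) * (μ - ε) < V 1 ω}).toReal < 1)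
    (J : Ω → ℕ → ℕ∞) (hJ0 : ∀ ω, J ω 0 = 0)
    (hJ : ∀ ω l, J ω (l + 1) =
      sInf {x : ℕ∞ | ∃ n : ℕ, x = (n : ℕ∞) ∧ J ω l < (n : ℕ∞) ∧
        (n : ℝ) * (μ - ε) < V (n + 1) ω})
    (γ : Ω → ℕ∞)
    (hγ : ∀ ω, γ ω = sInf {x : ℕ∞ | ∃ l : ℕ, x = (l : ℕ∞) ∧ 1 ≤ l ∧ J ω l = ⊤}) :
    ∃ c : ℝ, 0 < c ∧
      (∀ k : ℕ, ℙ {ω | (k : ℕ∞) < γ ω} ≤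
        ENNReal.ofReal ((1 - Real.exp (-(c * ∫ ω, V 1 ω ∂ℙ) / (μ - ε))) ^ k)) ∧
      ∫⁻ ω, (γ ω : ℝ≥0∞) ∂ℙ ≤
        ENNReal.ofReal (Real.exp ((c * ∫ ω, V 1 ω ∂ℙ) / (μ - ε))) := by
  classical
  set I : ℝ := ∫ ω, V 1 ω ∂ℙ with hIdef
  have hI0 : 0 ≤ I := integral_nonneg (fun ω => hnonneg 1 ω)
  -- the record events
  set A : ℕ → Set Ω := fun n => {ω | (n : ℝ) * (μ - ε) < V (n + 1) ω} with hAdef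
  have hA_meas : ∀ n, MeasurableSet (A n) := fun n =>
    measurableSet_lt measurable_const (hmeas (n + 1))
  -- identical distribution
  have hpA : ∀ n : ℕ, ℙ (A n) = ℙ {ω | (n : ℝ) * (μ - ε) < V 1 ω} := by
    intro n
    have h1 : A n = V (n + 1) ⁻¹' (Set.Ioi ((n : ℝ) * (μ - ε))) := rfl
    have h2 : {ω | (n : ℝ) * (μ - ε) < V 1 ω} = V 1 ⁻¹' (Set.Ioi ((n : ℝ) * (μ - ε))) := rfl
    rw [h1, h2, ← Measure.map_apply (hmeas (n + 1)) measurableSet_Ioi,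
      ← Measure.map_apply (hmeas 1) measurableSet_Ioi, hident (n + 1)]
  set pp : ℕ → ℝ := fun n => (ℙ (A n)).toReal with hppdef
  set p1 : ℝ := (ℙ {ω | (1 : ℝ) * (μ - ε) < V 1 ω}).toReal with hp1def
  have hpp0 : ∀ n, 0 ≤ pp n := fun n => ENNReal.toReal_nonneg
  have hpp1 : ∀ n, pp n ≤ 1 := fun n =>
    ENNReal.toReal_le_of_le_ofReal one_pos.le (by simpa using prob_le_one)
  have hp10 : 0 ≤ p1 := ENNReal.toReal_nonneg
  have hpp_le : ∀ n, 1 ≤ n → pp n ≤ p1 := by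
    intro n hn
    rw [hppdef]
    simp only
    rw [hpA n]
    apply ENNReal.toReal_mono (measure_ne_top _ _)
    apply measure_mono
    intro ω hω
    simp only [Set.mem_setOf_eq] at *
    have : (1 : ℝ) * (μ - ε) ≤ (n : ℝ) * (μ - ε) := by
      apply mul_le_mul_of_nonneg_right _ h.le
      exact_mod_cast hn
    linarith
  -- the constant c
  obtain ⟨c, hc, hcx⟩ : ∃ c : ℝ, 0 < c ∧ ∀ x : ℝ, 0 ≤ x → x ≤ p1 →
      Real.exp (-(c * x)) ≤ 1 - x := by
    rcases eq_or_lt_of_le hp10 with h0 | h0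
    · exact ⟨1, one_pos, fun x hx hx' => by
        have : x = 0 := le_antisymm (hx'.trans h0.symm.le) hx
        simp [this]⟩
    · set L : ℝ := Real.log (1 - p1) with hL
      have h1p : 0 < 1 - p1 := by linarith
      have hLneg : L < 0 := Real.log_neg h1p (by linarith)
      have hcpos : 0 < -L / p1 := div_pos (by linarith) h0
      refine ⟨-L / p1, hcpos, fun x hx hx' => ?_⟩
      set t : ℝ := x / p1 with ht
      have ht0 : 0 ≤ t := by positivity
      have ht1 : t ≤ 1 := by rw [ht, div_le_one h0]; exact hx'
      have key := convexOn_exp.2 (Set.mem_univ (0:ℝ)) (Set.mem_univ L)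
        (by linarith : (0:ℝ) ≤ 1 - t) ht0 (by ring)
      simp only [smul_eq_mul, mul_zero, zero_add, Real.exp_zero] at key
      have harg : -(-L / p1 * x) = t * L := by rw [ht]; field_simp
      rw [harg]
      rw [Real.exp_log h1p] at key
      have htp : t * p1 = x := by rw [ht]; field_simp
      calc Real.exp (t * L) ≤ (1 - t) * 1 + t * (1 - p1) := key
        _ = 1 - t * p1 := by ring
        _ = 1 - x := by rw [htp]
  set r : ℝ := Real.exp (-(c * I) / (μ - ε)) with hrdef
  have hr0 : 0 < r := Real.exp_pos _
  have hr1 : r ≤ 1 := by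
    rw [hrdef, Real.exp_le_one_iff, neg_div]
    simp only [Left.neg_nonpos_iff]
    positivity
  set q : ℝ := 1 - r with hqdef
  have hq0 : 0 ≤ q := by simp [hqdef, hr1]
  -- layer cake bound
  have hsum : ∀ s : Finset ℕ, (∀ n ∈ s, 1 ≤ n) → ∑ n ∈ s, pp n ≤ I / (μ - ε) := by
    set f : ℕ → Set Ω := fun m => {ω | ((m : ℝ) + 1) * (μ - ε) < V 1 ω} with hfdef
    have hfmeas : ∀ m, MeasurableSet (f m) := fun m =>
      measurableSet_lt measurable_const (hmeas 1)
    have hptw : ∀ ω, (∑' m : ℕ, (f m).indicator (1 : Ω → ℝ≥0∞) ω)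
        ≤ ENNReal.ofReal (V 1 ω / (μ - ε)) := by
      intro ω
      set M : ℕ := ⌊V 1 ω / (μ - ε)⌋₊ with hM
      have hvanish : ∀ m ∉ Finset.range M, (f m).indicator (1 : Ω → ℝ≥0∞) ω = 0 := by
        intro m hm
        rw [Set.indicator_apply_eq_zero]
        intro hmem
        exfalso
        apply hm
        rw [Finset.mem_range]
        have h1 : ((m : ℝ) + 1) < V 1 ω / (μ - ε) := by
          rw [lt_div_iff₀ h]
          exact hmem
        have : (m + 1 : ℕ) ≤ M := Nat.le_floor (by push_cast; linarith)
        omega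
      rw [tsum_eq_sum hvanish]
      calc ∑ m ∈ Finset.range M, (f m).indicator (1 : Ω → ℝ≥0∞) ω
          ≤ ∑ _m ∈ Finset.range M, 1 := by
            apply Finset.sum_le_sum
            intro i _
            by_cases hi : ω ∈ f i <;> simp [Set.indicator_apply, hi]
        _ = (M : ℝ≥0∞) := by simp
        _ = ENNReal.ofReal (M : ℝ) := (ENNReal.ofReal_natCast M).symm
        _ ≤ ENNReal.ofReal (V 1 ω / (μ - ε)) :=
            ENNReal.ofReal_le_ofReal (Nat.floor_le (div_nonneg (hnonneg 1 ω) h.le))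
    have htsum : (∑' m : ℕ, ℙ (f m)) ≤ ENNReal.ofReal (I / (μ - ε)) := by
      have h1 : (∑' m : ℕ, ℙ (f m)) = ∫⁻ ω, (∑' m : ℕ, (f m).indicator (1 : Ω → ℝ≥0∞) ω) ∂ℙ := by
        rw [lintegral_tsum (fun m => (measurable_one.indicator (hfmeas m)).aemeasurable)]
        congr 1
        ext m
        exact (lintegral_indicator_one (hfmeas m)).symm
      rw [h1]
      calc ∫⁻ ω, (∑' m : ℕ, (f m).indicator (1 : Ω → ℝ≥0∞) ω) ∂ℙ
          ≤ ∫⁻ ω, ENNReal.ofReal (V 1 ω / (μ - ε)) ∂ℙ := lintegral_mono hptw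
        _ = ENNReal.ofReal (∫ ω, V 1 ω / (μ - ε) ∂ℙ) :=
            (ofReal_integral_eq_lintegral_ofReal (hint.div_const _)
              (Filter.Eventually.of_forall (fun ω => div_nonneg (hnonneg 1 ω) h.le))).symm
        _ = ENNReal.ofReal (I / (μ - ε)) := by rw [integral_div]
    intro s hs
    set g : ℕ → ℝ≥0∞ := fun n => if 1 ≤ n then ℙ (A n) else 0 with hgdef
    have hsg : (∑ n ∈ s, ℙ (A n)) ≤ ENNReal.ofReal (I / (μ - ε)) := by
      have h1 : (∑ n ∈ s, ℙ (A n)) = ∑ n ∈ s, g n := by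
        apply Finset.sum_congr rfl
        intro n hn
        simp [hgdef, hs n hn]
      rw [h1]
      calc ∑ n ∈ s, g n ≤ ∑' n, g n := ENNReal.sum_le_tsum s
        _ = g 0 + ∑' m, g (m + 1) := tsum_eq_zero_add' ENNReal.summable
        _ = ∑' m, ℙ (f m) := by
            have hg0 : g 0 = 0 := by simp [hgdef]
            have hgm : ∀ m : ℕ, g (m + 1) = ℙ (f m) := by
              intro m
              rw [hgdef]
              simp only
              rw [if_pos (by omega : 1 ≤ m + 1), hpA (m + 1)]
              congr 1
              ext ω
              simp only [hfdef, Set.mem_setOf_eq]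
              constructor <;> intro hh <;> [skip; skip] <;> · push_cast at hh ⊢; linarith
            rw [hg0, zero_add]
            exact tsum_congr hgm
        _ ≤ ENNReal.ofReal (I / (μ - ε)) := htsum
    have h2 : (∑ n ∈ s, ℙ (A n)).toReal = ∑ n ∈ s, (ℙ (A n)).toReal :=
      ENNReal.toReal_sum (fun a _ => measure_ne_top _ _)
    have h3 : ∑ n ∈ s, pp n = (∑ n ∈ s, ℙ (A n)).toReal := h2.symm
    rw [h3]
    calc (∑ n ∈ s, ℙ (A n)).toReal ≤ (ENNReal.ofReal (I / (μ - ε))).toReal :=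
        ENNReal.toReal_mono ENNReal.ofReal_ne_top hsg
      _ ≤ I / (μ - ε) := le_of_eq (ENNReal.toReal_ofReal (div_nonneg hI0 h.le))
  -- independence of past and future
  have hsplit : ∀ (n : ℕ) (s t : Set Ω),
      MeasurableSet[⨆ i ∈ Set.Iic n, MeasurableSpace.comap (V i) Real.measurableSpace] s →
      MeasurableSet[⨆ i ∈ (Set.Iic n)ᶜ, MeasurableSpace.comap (V i) Real.measurableSpace] t →
      ℙ (s ∩ t) = ℙ s * ℙ t := by
    intro n s t hs ht
    have hiI : iIndep (fun i => MeasurableSpace.comap (V i) Real.measurableSpace) ℙ :=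
      (iIndepFun_iff_iIndep _ _ _).mp hindep
    have h_le : ∀ i, MeasurableSpace.comap (V i) Real.measurableSpace ≤ _ :=
      fun i => (hmeas i).comap_le
    have hInd := indep_biSup_compl h_le hiI (Set.Iic n)
    exact (Indep_iff _ _ _).mp hInd s t hs ht
  have hA_in : ∀ (i : ℕ) (S : Set ℕ), i + 1 ∈ S →
      MeasurableSet[⨆ j ∈ S, MeasurableSpace.comap (V j) Real.measurableSpace] (A i) := by
    intro i S hmem
    have h1 : MeasurableSet[MeasurableSpace.comap (V (i + 1)) Real.measurableSpace] (A i) := by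
      refine ⟨Set.Ioi ((i : ℝ) * (μ - ε)), measurableSet_Ioi, ?_⟩
      rw [hAdef]
      rfl
    have h2 : MeasurableSpace.comap (V (i + 1)) Real.measurableSpace ≤
        ⨆ j ∈ S, MeasurableSpace.comap (V j) Real.measurableSpace :=
      le_biSup (fun j => MeasurableSpace.comap (V j) Real.measurableSpace) hmem
    exact h2 _ h1
  -- product formula for complements
  have hprod : ∀ j N : ℕ, ℙ (⋂ i ∈ Finset.Ioc j N, (A i)ᶜ) = ∏ i ∈ Finset.Ioc j N, ℙ ((A i)ᶜ) := by
    intro j N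
    induction N with
    | zero =>
      have : Finset.Ioc j 0 = ∅ := Finset.Ioc_eq_empty (by omega)
      simp [this]
    | succ N ih =>
      by_cases hjN : j ≤ N
      · have hins : Finset.Ioc j (N + 1) = insert (N + 1) (Finset.Ioc j N) := by
          ext i; simp [Finset.mem_Ioc, Finset.mem_insert]; omega
        have hnm : (N + 1) ∉ Finset.Ioc j N := by simp [Finset.mem_Ioc]
        rw [hins, Finset.set_biInter_insert, Finset.prod_insert hnm, ← ih,
          Set.inter_comm, mul_comm]
        apply hsplit (N + 1)
        · apply MeasurableSet.biInter (Finset.Ioc j N).countable_toSet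
          intro i hi
          have hiN : i + 1 ∈ Set.Iic (N + 1) := by
            simp only [Finset.coe_Ioc, Set.mem_Ioc] at hi
            simp [Set.mem_Iic]; omega
          exact (hA_in i _ hiN).compl
        · have : N + 1 + 1 ∈ (Set.Iic (N + 1))ᶜ := by simp
          exact (hA_in (N + 1) _ this).compl
      · have h1 : Finset.Ioc j (N + 1) = ∅ := Finset.Ioc_eq_empty (by omega)
        simp [h1]
  -- single-step bound
  have hstep : ∀ j : ℕ, ℙ (⋃ (n : ℕ) (_ : j < n), A n) ≤ ENNReal.ofReal q := by
    have hAc : ∀ n, ℙ ((A n)ᶜ) = ENNReal.ofReal (1 - pp n) := by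
      intro n
      rw [prob_compl_eq_one_sub (hA_meas n)]
      rw [ENNReal.ofReal_sub _ (hpp0 n), ENNReal.ofReal_one,
        hppdef]
      simp only
      rw [ENNReal.ofReal_toReal (measure_ne_top _ _)]
    have hprod_ge : ∀ s : Finset ℕ, (∀ n ∈ s, 1 ≤ n) →
        ENNReal.ofReal (Real.exp (-(c * ∑ i ∈ s, pp i))) ≤ ∏ i ∈ s, ℙ ((A i)ᶜ) := by
      intro s
      induction s using Finset.induction with
      | empty => simp
      | insert a s hnotmem ih =>
        intro hall
        rw [Finset.sum_insert hnotmem, Finset.prod_insert hnotmem]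
        have h1 : Real.exp (-(c * (pp a + ∑ i ∈ s, pp i)))
            = Real.exp (-(c * pp a)) * Real.exp (-(c * ∑ i ∈ s, pp i)) := by
          rw [← Real.exp_add]; ring_nf
        rw [h1, ENNReal.ofReal_mul (Real.exp_pos _).le]
        apply mul_le_mul'
        · rw [hAc a]
          exact ENNReal.ofReal_le_ofReal
            (hcx (pp a) (hpp0 a) (hpp_le a (hall a (Finset.mem_insert_self a s))))
        · exact ih (fun n hn => hall n (Finset.mem_insert_of_mem hn))
    have hBN : ∀ j N : ℕ, ℙ (⋃ i ∈ Finset.Ioc j N, A i) ≤ ENNReal.ofReal q := by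
      intro j N
      have hions : ∀ n ∈ Finset.Ioc j N, 1 ≤ n := fun n hn => by
        simp only [Finset.mem_Ioc] at hn; omega
      have hmeasB : MeasurableSet (⋃ i ∈ Finset.Ioc j N, A i) :=
        (Finset.Ioc j N).measurableSet_biUnion (fun i _ => hA_meas i)
      have hcompl : (⋃ i ∈ Finset.Ioc j N, A i)ᶜ = ⋂ i ∈ Finset.Ioc j N, (A i)ᶜ := by
        simp [Set.compl_iUnion]
      have hge : ENNReal.ofReal r ≤ ℙ ((⋃ i ∈ Finset.Ioc j N, A i)ᶜ) := by
        rw [hcompl, hprod j N]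
        refine le_trans ?_ (hprod_ge _ hions)
        apply ENNReal.ofReal_le_ofReal
        apply Real.exp_le_exp.mpr
        have hs := hsum _ hions
        rw [hrdef] at *
        rw [neg_div]
        have : c * ∑ i ∈ Finset.Ioc j N, pp i ≤ c * I / (μ - ε) := by
          rw [mul_div_assoc]
          exact mul_le_mul_of_nonneg_left hs hc.le
        linarith
      have h2 : ℙ (⋃ i ∈ Finset.Ioc j N, A i) = 1 - ℙ ((⋃ i ∈ Finset.Ioc j N, A i)ᶜ) := by
        rw [prob_compl_eq_one_sub hmeasB, ENNReal.sub_sub_cancel ENNReal.one_ne_top prob_le_one]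
      rw [h2]
      calc 1 - ℙ ((⋃ i ∈ Finset.Ioc j N, A i)ᶜ) ≤ 1 - ENNReal.ofReal r :=
          tsub_le_tsub_left hge 1
        _ = ENNReal.ofReal q := by
            rw [hqdef, ENNReal.ofReal_sub _ hr0.le, ENNReal.ofReal_one]
    intro j
    have hunion : (⋃ (n : ℕ) (_ : j < n), A n) = ⋃ N : ℕ, ⋃ i ∈ Finset.Ioc j N, A i := by
      ext ω
      simp only [Set.mem_iUnion, Finset.mem_Ioc]
      constructor
      · rintro ⟨n, hn, hω⟩; exact ⟨n, n, ⟨hn, le_refl n⟩, hω⟩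
      · rintro ⟨N, n, ⟨hn, _⟩, hω⟩; exact ⟨n, hn, hω⟩
    rw [hunion]
    have hmono : Monotone (fun N : ℕ => ⋃ i ∈ Finset.Ioc j N, A i) := by
      intro N M hNM
      apply Set.biUnion_subset_biUnion_left
      intro i hi
      have h1 : j < i ∧ i ≤ N := Finset.mem_Ioc.mp hi
      exact Finset.mem_coe.mpr (Finset.mem_Ioc.mpr ⟨h1.1, h1.2.trans hNM⟩)
    rw [hmono.directed_le.measure_iUnion]
    exact iSup_le (fun N => hBN j N)
  -- the events E and G
  set E : ℕ → ℕ → Set Ω := fun k j =>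
    {ω | ∃ s : Finset ℕ, k ≤ s.card ∧ ∀ i ∈ s, j < i ∧ ω ∈ A i} with hEdef
  set G : ℕ → ℕ → Set Ω := fun n j => A n ∩ ⋂ i ∈ Finset.Ioo j n, (A i)ᶜ with hGdef
  have hE_general : ∀ (m : MeasurableSpace Ω) (k j : ℕ), (∀ i, j < i → MeasurableSet[m] (A i)) →
      MeasurableSet[m] (E k j) := by
    intro m k j hA
    have hid : E k j = ⋃ (s : Finset ℕ), ⋃ (_ : k ≤ s.card),
        ⋂ i ∈ (s : Set ℕ), ({ω | j < i} ∩ A i) := by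
      rw [hEdef]
      ext ω
      simp only [Set.mem_setOf_eq, Set.mem_iUnion, Set.mem_iInter, Set.mem_inter_iff,
        Finset.mem_coe]
      constructor
      · rintro ⟨s, hc', hall⟩; exact ⟨s, hc', fun i hi => hall i hi⟩
      · rintro ⟨s, hc', hall⟩; exact ⟨s, hc', fun i hi => hall i hi⟩
    rw [hid]
    apply MeasurableSet.iUnion
    intro s
    apply MeasurableSet.iUnion
    intro _
    apply MeasurableSet.biInter s.countable_toSet
    intro i hi
    by_cases hji : j < i
    · have h1 : {ω : Ω | j < i} = Set.univ := by ext ω; simp [hji]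
      rw [h1, Set.univ_inter]
      exact hA i hji
    · have h1 : {ω : Ω | j < i} = ∅ := by ext ω; simp [hji]
      rw [h1, Set.empty_inter]
      exact @MeasurableSet.empty Ω m
  have hEmeas : ∀ k j, MeasurableSet (E k j) :=
    fun k j => hE_general _ k j (fun i _ => hA_meas i)
  have hGmeas : ∀ n j, MeasurableSet (G n j) := fun n j =>
    (hA_meas n).inter (MeasurableSet.biInter (Finset.Ioo j n).countable_toSet
      (fun i _ => (hA_meas i).compl))
  have hE_upper : ∀ k n : ℕ,
      MeasurableSet[⨆ j ∈ (Set.Iic (n+1))ᶜ, MeasurableSpace.comap (V j) Real.measurableSpace]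
        (E k n) := by
    intro k n
    apply hE_general
    intro i hi
    apply hA_in
    simp only [Set.mem_compl_iff, Set.mem_Iic, not_le]
    omega
  have hG_lower : ∀ n j : ℕ,
      MeasurableSet[⨆ i ∈ Set.Iic (n+1), MeasurableSpace.comap (V i) Real.measurableSpace]
        (G n j) := by
    intro n j
    rw [hGdef]
    apply MeasurableSet.inter
    · exact hA_in n _ (by simp)
    · apply MeasurableSet.biInter (Finset.Ioo j n).countable_toSet
      intro i hi
      have : j < i ∧ i < n := Finset.mem_Ioo.mp hi
      exact (hA_in i _ (by simp [Set.mem_Iic]; omega)).compl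
  -- decomposition by the first record after j
  have hdecomp : ∀ k j : ℕ, E (k+1) j = ⋃ (n : ℕ) (_ : j < n), G n j ∩ E k n := by
    intro k j
    ext ω
    simp only [hEdef, hGdef, Set.mem_setOf_eq, Set.mem_iUnion, Set.mem_inter_iff,
      Set.mem_iInter, Set.mem_compl_iff]
    constructor
    · rintro ⟨s, hcard, hall⟩
      have hsne : s.Nonempty := Finset.card_pos.mp (by omega)
      obtain ⟨a, ha⟩ := hsne
      have hex : ∃ i, j < i ∧ ω ∈ A i := ⟨a, hall a ha⟩
      set n := Nat.find hex with hn
      obtain ⟨hjn, hωn⟩ := Nat.find_spec hex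
      refine ⟨n, hjn, ⟨hωn, ?_⟩, ?_⟩
      · intro i hi
        have hi' : j < i ∧ i < n := by simpa [Finset.mem_Ioo] using hi
        intro hωi
        exact Nat.find_min hex hi'.2 ⟨hi'.1, hωi⟩
      · refine ⟨s.erase n, ?_, ?_⟩
        · by_cases hmem : n ∈ s
          · rw [Finset.card_erase_of_mem hmem]; omega
          · rw [Finset.erase_eq_of_notMem hmem]; omega
        · intro i hi
          obtain ⟨hine, his⟩ := Finset.mem_erase.mp hi
          obtain ⟨hji, hωi⟩ := hall i his
          have : n ≤ i := Nat.find_min' hex ⟨hji, hωi⟩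
          exact ⟨by omega, hωi⟩
    · rintro ⟨n, hjn, ⟨hωn, _⟩, s, hcard, hall⟩
      refine ⟨insert n s, ?_, ?_⟩
      · have : n ∉ s := fun hns => by have := (hall n hns).1; omega
        rw [Finset.card_insert_of_notMem this]; omega
      · intro i hi
        rcases Finset.mem_insert.mp hi with rfl | his
        · exact ⟨hjn, hωn⟩
        · obtain ⟨hni, hωi⟩ := hall i his
          exact ⟨by omega, hωi⟩
  -- disjointness
  have hGdisj : ∀ j m n : ℕ, m ≠ n → j < m → j < n → Disjoint (G m j) (G n j) := by
    intro j m n hmn hjm hjn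
    wlog hlt : m < n generalizing m n
    · exact (this n m hmn.symm hjn hjm (by omega)).symm
    rw [Set.disjoint_left]
    simp only [hGdef]
    rintro ω ⟨hωm, -⟩ ⟨-, hGn⟩
    have hmem : m ∈ Finset.Ioo j n := Finset.mem_Ioo.mpr ⟨hjm, hlt⟩
    exact (Set.mem_iInter₂.mp hGn m hmem) hωm
  -- independence of G and E
  have hGE : ∀ k n j : ℕ, ℙ (G n j ∩ E k n) = ℙ (G n j) * ℙ (E k n) :=
    fun k n j => hsplit (n + 1) _ _ (hG_lower n j) (hE_upper k n)
  -- main induction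
  have hmain : ∀ k j : ℕ, ℙ (E k j) ≤ (ENNReal.ofReal q) ^ k := by
    intro k
    induction k with
    | zero => intro j; simpa using prob_le_one
    | succ k ih =>
      intro j
      rw [hdecomp k j]
      have hmeas_t : ∀ n : ℕ, MeasurableSet (⋃ (_ : j < n), G n j ∩ E k n) := fun n =>
        MeasurableSet.iUnion (fun _ => (hGmeas n j).inter (hEmeas k n))
      have hdisj2 : Pairwise (Function.onFun Disjoint
          (fun n => ⋃ (_ : j < n), G n j ∩ E k n)) := by
        intro m n hmn
        unfold Function.onFun
        by_cases hjm : j < m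
        · by_cases hjn : j < n
          · simp only [Set.iUnion_eq_if, if_pos hjm, if_pos hjn]
            exact ((hGdisj j m n hmn hjm hjn).mono Set.inter_subset_left Set.inter_subset_left)
          · simp [hjn]
        · simp [hjm]
      rw [measure_iUnion hdisj2 hmeas_t]
      have hmeasG : ∀ n : ℕ, MeasurableSet (⋃ (_ : j < n), G n j) := fun n =>
        MeasurableSet.iUnion (fun _ => hGmeas n j)
      have hdisjG : Pairwise (Function.onFun Disjoint (fun n => ⋃ (_ : j < n), G n j)) := by
        intro m n hmn
        unfold Function.onFun
        by_cases hjm : j < m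
        · by_cases hjn : j < n
          · simp only [Set.iUnion_eq_if, if_pos hjm, if_pos hjn]
            exact hGdisj j m n hmn hjm hjn
          · simp [hjn]
        · simp [hjm]
      calc ∑' n, ℙ (⋃ (_ : j < n), G n j ∩ E k n)
          ≤ ∑' n, ℙ (⋃ (_ : j < n), G n j) * (ENNReal.ofReal q) ^ k := by
            apply ENNReal.tsum_le_tsum
            intro n
            by_cases hjn : j < n
            · simp only [Set.iUnion_eq_if, if_pos hjn]
              rw [hGE k n j]
              exact mul_le_mul_right (ih n) _
            · simp [hjn]
        _ = (∑' n, ℙ (⋃ (_ : j < n), G n j)) * (ENNReal.ofReal q) ^ k :=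
            ENNReal.tsum_mul_right
        _ ≤ ENNReal.ofReal q * (ENNReal.ofReal q) ^ k := by
            apply mul_le_mul_left
            rw [← measure_iUnion hdisjG hmeasG]
            refine le_trans (measure_mono ?_) (hstep j)
            apply Set.iUnion_mono
            intro n
            exact Set.iUnion_mono (fun hn => Set.inter_subset_left)
        _ = (ENNReal.ofReal q) ^ (k + 1) := (pow_succ' _ _).symm
  -- inclusion of the tail event of γ into E
  have hJmem : ∀ (ω : Ω) (l : ℕ), J ω (l + 1) ≠ ⊤ → ∃ n : ℕ, J ω (l + 1) = (n : ℕ∞) ∧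
      J ω l < (n : ℕ∞) ∧ (n : ℝ) * (μ - ε) < V (n + 1) ω := by
    intro ω l hne
    set S : Set ℕ∞ := {x : ℕ∞ | ∃ n : ℕ, x = (n : ℕ∞) ∧ J ω l < (n : ℕ∞) ∧
        (n : ℝ) * (μ - ε) < V (n + 1) ω} with hS
    rw [hJ ω l] at hne ⊢
    obtain ⟨m, hm⟩ : ∃ m : ℕ, sInf S = (m : ℕ∞) := by
      cases hSinf : sInf S with
      | top => exact absurd hSinf hne
      | coe m => exact ⟨m, rfl⟩
    have hlt : sInf S < (m : ℕ∞) + 1 := by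
      rw [hm, show ((m : ℕ∞) + 1) = ((m + 1 : ℕ) : ℕ∞) by push_cast; ring]
      exact_mod_cast Nat.lt_succ_self m
    obtain ⟨x, hxS, hxlt⟩ := sInf_lt_iff.mp hlt
    obtain ⟨n, rfl, hn1, hn2⟩ := hxS
    have hge : (m : ℕ∞) ≤ (n : ℕ∞) := hm ▸ sInf_le ⟨n, rfl, hn1, hn2⟩
    have hle : (n : ℕ∞) ≤ (m : ℕ∞) := by
      have : (n : ℕ∞) < (m : ℕ∞) + 1 := hxlt
      rw [show ((m : ℕ∞) + 1) = ((m + 1 : ℕ) : ℕ∞) by push_cast; ring] at this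
      exact_mod_cast Nat.lt_succ_iff.mp (by exact_mod_cast this)
    have hnm : (n : ℕ∞) = (m : ℕ∞) := le_antisymm hle hge
    exact ⟨m, hm, hnm ▸ hn1, by rwa [← Nat.cast_inj.mp hnm]⟩
  have hchain : ∀ (ω : Ω) (l : ℕ), J ω l ≠ ⊤ → ∃ s : Finset ℕ,
      l ≤ s.card ∧ (∀ i ∈ s, 0 < i ∧ ω ∈ A i) ∧ ∀ i ∈ s, (i : ℕ∞) ≤ J ω l := by
    intro ω l
    induction l with
    | zero => intro _; exact ⟨∅, by simp⟩
    | succ l ih =>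
      intro hne
      obtain ⟨n, hJn, hlt, hV⟩ := hJmem ω l hne
      have hJl_ne : J ω l ≠ ⊤ := ne_top_of_lt hlt
      obtain ⟨s, hcard, hprop, hbound⟩ := ih hJl_ne
      have hnot : n ∉ s := by
        intro hns
        exact absurd (lt_of_le_of_lt (hbound n hns) hlt) (lt_irrefl _)
      refine ⟨insert n s, ?_, ?_, ?_⟩
      · rw [Finset.card_insert_of_notMem hnot]; omega
      · intro i hi
        rcases Finset.mem_insert.mp hi with rfl | his
        · have h0 : (0 : ℕ∞) < _ := lt_of_le_of_lt zero_le hlt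
          exact ⟨by exact_mod_cast h0, by rw [hAdef]; exact hV⟩
        · exact hprop i his
      · intro i hi
        rw [hJn]
        rcases Finset.mem_insert.mp hi with rfl | his
        · exact le_refl _
        · exact le_trans (hbound i his) hlt.le
  have hJE : ∀ (ω : Ω) (k : ℕ), (k : ℕ∞) < γ ω → ω ∈ E k 0 := by
    intro ω k hk
    have hJk : J ω k ≠ ⊤ := by
      intro htop
      rcases Nat.eq_zero_or_pos k with rfl | hkpos
      · rw [hJ0 ω] at htop; exact absurd htop (by simp)
      · have : γ ω ≤ (k : ℕ∞) := by
          rw [hγ ω]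
          exact sInf_le ⟨k, rfl, hkpos, htop⟩
        exact absurd hk (not_lt.mpr this)
    obtain ⟨s, hcard, hprop, -⟩ := hchain ω k hJk
    rw [hEdef]
    exact ⟨s, hcard, fun i hi => (hprop i hi)⟩
  -- conclusion
  refine ⟨c, hc, ?_, ?_⟩
  · intro k
    calc ℙ {ω | (k : ℕ∞) < γ ω} ≤ ℙ (E k 0) := measure_mono (fun ω hω => hJE ω k hω)
      _ ≤ (ENNReal.ofReal q) ^ k := hmain k 0
      _ = ENNReal.ofReal (q ^ k) := (ENNReal.ofReal_pow hq0 k).symm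
  · have hpt : ∀ ω, (γ ω : ℝ≥0∞) ≤ ∑' k : ℕ, (E k 0).indicator (1 : Ω → ℝ≥0∞) ω := by
      intro ω
      have hterm : ∀ k : ℕ, (if (k : ℕ∞) < γ ω then (1 : ℝ≥0∞) else 0)
          ≤ (E k 0).indicator (1 : Ω → ℝ≥0∞) ω := by
        intro k
        split
        · next hk => rw [Set.indicator_of_mem (hJE ω k hk)]; rfl
        · exact zero_le
      refine le_trans ?_ (ENNReal.tsum_le_tsum hterm)
      cases hγω : γ ω with
      | top =>
        have hall : ∀ k : ℕ, (if (k : ℕ∞) < (⊤ : ℕ∞) then (1 : ℝ≥0∞) else 0) = 1 :=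
          fun k => if_pos (WithTop.coe_lt_top k)
        rw [tsum_congr hall, ENNReal.tsum_const_eq_top_of_ne_zero one_ne_zero]
        exact le_top
      | coe m =>
        have hle : (m : ℝ≥0∞) ≤ ∑' k : ℕ, (if (k : ℕ∞) < γ ω then (1 : ℝ≥0∞) else 0) := by
          calc (m : ℝ≥0∞) = ∑ k ∈ Finset.range m, 1 := by simp
            _ = ∑ k ∈ Finset.range m, (if (k : ℕ∞) < γ ω then (1 : ℝ≥0∞) else 0) := by
                apply Finset.sum_congr rfl
                intro k hk
                rw [if_pos]
                rw [hγω]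
                exact_mod_cast Finset.mem_range.mp hk
            _ ≤ ∑' k : ℕ, (if (k : ℕ∞) < γ ω then (1 : ℝ≥0∞) else 0) := ENNReal.sum_le_tsum _
        simpa [hγω] using hle
    calc ∫⁻ ω, (γ ω : ℝ≥0∞) ∂ℙ
        ≤ ∫⁻ ω, (∑' k : ℕ, (E k 0).indicator (1 : Ω → ℝ≥0∞) ω) ∂ℙ := lintegral_mono hpt
      _ = ∑' k : ℕ, ℙ (E k 0) := by
          rw [lintegral_tsum (fun k => (measurable_one.indicator (hEmeas k 0)).aemeasurable)]
          exact tsum_congr (fun k => lintegral_indicator_one (hEmeas k 0))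
      _ ≤ ∑' k : ℕ, (ENNReal.ofReal q) ^ k := ENNReal.tsum_le_tsum (fun k => hmain k 0)
      _ = (1 - ENNReal.ofReal q)⁻¹ := ENNReal.tsum_geometric _
      _ = (ENNReal.ofReal r)⁻¹ := by
          rw [hqdef, ENNReal.ofReal_sub _ hr0.le, ENNReal.ofReal_one,
            ENNReal.sub_sub_cancel ENNReal.one_ne_top (ENNReal.ofReal_le_one.mpr hr1)]
      _ = ENNReal.ofReal r⁻¹ := (ENNReal.ofReal_inv_of_pos hr0).symm
      _ = ENNReal.ofReal (Real.exp ((c * I) / (μ - ε))) := by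
          rw [hrdef, neg_div, Real.exp_neg, inv_inv]
end

section
/- Suppose V is a nonnegative random variable with E[V^q] < ∞ for some q > 2, and let κ(V) be the first index K such that V_{n+1} ≤ n(μ-ε)/s for all n ≥ K, where (V_n) are i.i.d. copies of V. Then E[κ(V)] = O(s^{q/(q-1)}) as s → ∞. -/
open MeasureTheory ProbabilityTheory Filter Set
open scoped ENNReal NNReal Topology


lemma stmt9_coe_le (x : ℕ∞) :
    (x : ℝ≥0∞) ≤ ∑' k : ℕ, (if (k : ℕ∞) < x then (1 : ℝ≥0∞) else 0) := by
  induction x using ENat.recTopCoe with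
  | top =>
    have h : ∀ k : ℕ, (if (k : ℕ∞) < (⊤ : ℕ∞) then (1 : ℝ≥0∞) else 0) = 1 :=
      fun k => if_pos (ENat.coe_lt_top k)
    rw [tsum_congr h, ENNReal.tsum_const_eq_top_of_ne_zero one_ne_zero]
    exact le_top
  | coe m =>
    have h1 : ((m : ℕ∞) : ℝ≥0∞) = (m : ℝ≥0∞) := ENat.toENNReal_coe m
    rw [h1]
    have h2 : (m : ℝ≥0∞) = ∑ k ∈ Finset.range m, (if (k : ℕ∞) < (m : ℕ∞) then (1 : ℝ≥0∞) else 0) := by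
      rw [Finset.sum_congr rfl (fun k hk => if_pos (by exact_mod_cast Finset.mem_range.mp hk))]
      simp
    rw [h2]
    exact ENNReal.sum_le_tsum _

lemma stmt9_real_id {c s : ℝ} (hc : 0 < c) (hs : 0 < s) {x : ℝ} (hx : 0 < x) (q : ℝ) :
    x * ((x * c / s) ^ q)⁻¹ = (s / c) ^ q * x ^ (1 - q) := by
  have h1 : x * c / s = x * (c / s) := by ring
  have h2 : (x * (c / s)) ^ q = x ^ q * (c / s) ^ q :=
    Real.mul_rpow hx.le (div_nonneg hc.le hs.le)
  have h3 : x ^ (1 - q) = x ^ (1:ℝ) / x ^ q := Real.rpow_sub hx 1 q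
  have h4 : ((c / s) ^ q)⁻¹ = (s / c) ^ q := by
    rw [← Real.inv_rpow (div_nonneg hc.le hs.le), inv_div]
  have h5 : x ^ q ≠ 0 := (Real.rpow_pos_of_pos hx q).ne'
  rw [h1, h2, mul_inv, h4, h3, Real.rpow_one]
  field_simp

lemma stmt9_inner_count (K n : ℕ) (D : ℝ≥0∞) :
    ∑' k : ℕ, (if k + (K + 1) ≤ n then D else 0) ≤
      (if K + 1 ≤ n then (n : ℝ≥0∞) * D else 0) := by
  by_cases hn : K + 1 ≤ n
  · simp only [hn, if_true]
    have hvan : ∀ k ∉ Finset.range n, (if k + (K + 1) ≤ n then D else 0) = 0 := by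
      intro k hk
      exact if_neg (fun hle => (Finset.mem_range.not.mp hk) (by omega))
    calc ∑' k : ℕ, (if k + (K + 1) ≤ n then D else 0)
        = ∑ k ∈ Finset.range n, (if k + (K + 1) ≤ n then D else 0) := tsum_eq_sum hvan
      _ ≤ ∑ _k ∈ Finset.range n, D := Finset.sum_le_sum (fun k _ => by split <;> simp)
      _ = (n : ℝ≥0∞) * D := by simp [Finset.sum_const, mul_comm]
  · have : ∀ k : ℕ, (if k + (K + 1) ≤ n then D else 0) = 0 := fun k => if_neg (by omega)
    simp [this, hn]

-- key pointwise telescoping inequality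
lemma stmt9_key {q : ℝ} (hq : 2 < q) {x : ℝ} (hx : 1 ≤ x) :
    x ^ (1 - q) ≤ (2 / min 1 (q - 2)) * (x ^ (2 - q) - (x + 1) ^ (2 - q)) := by
  set m : ℝ := min 1 (q - 2) with hm
  have hm0 : 0 < m := lt_min one_pos (by linarith)
  have hm1 : m ≤ 1 := min_le_left _ _
  have hmq : m ≤ q - 2 := min_le_right _ _
  have hx0 : 0 < x := lt_of_lt_of_le one_pos hx
  have hx1 : 0 < x + 1 := by linarith
  have hfrac0 : 0 < x / (x + 1) := div_pos hx0 hx1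
  have hfrac1 : x / (x + 1) ≤ 1 := by
    rw [div_le_one hx1]; linarith
  -- Bernoulli step
  have hB : (x / (x + 1)) ^ (q - 2) ≤ 1 - m * (1 / (x + 1)) := by
    have e1 : x / (x + 1) = 1 + (-(1 / (x + 1))) := by field_simp; ring
    have h1 : (x / (x + 1)) ^ (q - 2) ≤ (x / (x + 1)) ^ m :=
      Real.rpow_le_rpow_of_exponent_ge hfrac0 hfrac1 hmq
    have h2 : (1 + (-(1 / (x + 1)))) ^ m ≤ 1 + m * (-(1 / (x + 1))) := by
      apply rpow_one_add_le_one_add_mul_self _ hm0.le hm1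
      have : 1 / (x + 1) ≤ 1 := by
        rw [div_le_one hx1]; linarith
      linarith
    calc (x / (x + 1)) ^ (q - 2) ≤ (x / (x + 1)) ^ m := h1
      _ = (1 + (-(1 / (x + 1)))) ^ m := by rw [← e1]
      _ ≤ 1 + m * (-(1 / (x + 1))) := h2
      _ = 1 - m * (1 / (x + 1)) := by ring
  -- rewrite (x+1)^(2-q)
  have hxp : (x + 1) ^ (2 - q) = x ^ (2 - q) * (x / (x + 1)) ^ (q - 2) := by
    have hdiv : (x / (x + 1)) ^ (q - 2) = x ^ (q - 2) / (x + 1) ^ (q - 2) :=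
      Real.div_rpow hx0.le hx1.le _
    have hmul : x ^ (2 - q) * x ^ (q - 2) = 1 := by
      rw [← Real.rpow_add hx0]; norm_num
    have hneg : (x + 1) ^ (2 - q) = ((x + 1) ^ (q - 2))⁻¹ := by
      rw [show (2 - q) = -(q - 2) by ring, Real.rpow_neg hx1.le]
    rw [hdiv, hneg, div_eq_mul_inv, ← mul_assoc, hmul, one_mul]
  have hpos2q : 0 < x ^ (2 - q) := Real.rpow_pos_of_pos hx0 _
  have hdiff : x ^ (2 - q) - (x + 1) ^ (2 - q) ≥ x ^ (2 - q) * (m * (1 / (x + 1))) := by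
    rw [hxp]
    have := mul_le_mul_of_nonneg_left hB hpos2q.le
    nlinarith
  have hx1q : x ^ (1 - q) * x = x ^ (2 - q) := by
    nth_rewrite 2 [← Real.rpow_one x]
    rw [← Real.rpow_add hx0, show (1 - q + 1 : ℝ) = 2 - q by ring]
  have hP : 0 < x ^ (1 - q) := Real.rpow_pos_of_pos hx0 _
  have hu0 : 0 < 1 / (x + 1) := by positivity
  have hxu : (1:ℝ)/2 ≤ x * (1 / (x + 1)) := by
    rw [mul_one_div, le_div_iff₀ hx1]; linarith
  have hc : (0:ℝ) ≤ 2 * m * (x ^ (1 - q)) := by positivity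
  have h1 := mul_le_mul_of_nonneg_left hxu hc
  have hdiff2 : x ^ (2 - q) - (x + 1) ^ (2 - q) ≥ (x ^ (1 - q) * x) * (m * (1 / (x + 1))) := by
    rw [hx1q]; exact hdiff
  rw [div_mul_eq_mul_div, le_div_iff₀ hm0, mul_comm (x ^ (1 - q)) m]
  nlinarith [h1, hdiff2]

lemma stmt9_tail {q : ℝ} (hq : 2 < q) (N : ℕ) (hN : 1 ≤ N) :
    ∑' j : ℕ, ENNReal.ofReal (((j + N : ℕ) : ℝ) ^ (1 - q)) ≤
      ENNReal.ofReal ((2 / min 1 (q - 2)) * ((N : ℝ) ^ (2 - q))) := by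
  have hmin : 0 < min 1 (q - 2) := lt_min one_pos (by linarith)
  have hC1 : 0 ≤ 2 / min 1 (q - 2) := by positivity
  apply Summable.tsum_le_of_sum_le ENNReal.summable
  intro u
  obtain ⟨n, hn⟩ : ∃ n, u ⊆ Finset.range n :=
    ⟨(u.sup id) + 1, fun k hk => Finset.mem_range.mpr (Nat.lt_succ_of_le (Finset.le_sup (f := id) hk))⟩
  have hterm : ∀ j : ℕ, (0:ℝ) ≤ ((j + N : ℕ) : ℝ) ^ (1 - q) :=
    fun j => Real.rpow_nonneg (by positivity) _
  calc ∑ j ∈ u, ENNReal.ofReal (((j + N : ℕ) : ℝ) ^ (1 - q))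
      ≤ ∑ j ∈ Finset.range n, ENNReal.ofReal (((j + N : ℕ) : ℝ) ^ (1 - q)) :=
        Finset.sum_le_sum_of_subset hn
    _ = ENNReal.ofReal (∑ j ∈ Finset.range n, ((j + N : ℕ) : ℝ) ^ (1 - q)) :=
        (ENNReal.ofReal_sum_of_nonneg (fun j _ => hterm j)).symm
    _ ≤ ENNReal.ofReal ((2 / min 1 (q - 2)) * ((N : ℝ) ^ (2 - q))) := by
        apply ENNReal.ofReal_le_ofReal
        set g : ℕ → ℝ := fun j => ((j + N : ℕ) : ℝ) ^ (2 - q) with hg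
        have hkey : ∀ j : ℕ, ((j + N : ℕ) : ℝ) ^ (1 - q) ≤
            (2 / min 1 (q - 2)) * (g j - g (j + 1)) := by
          intro j
          have hx : (1:ℝ) ≤ ((j + N : ℕ) : ℝ) := by
            have : 1 ≤ j + N := le_add_of_nonneg_of_le (Nat.zero_le j) hN
            exact_mod_cast this
          have := stmt9_key hq hx
          have hcast : ((j + 1 + N : ℕ) : ℝ) = ((j + N : ℕ) : ℝ) + 1 := by push_cast; ring
          simp only [hg, hcast]
          convert this using 4
        calc ∑ j ∈ Finset.range n, ((j + N : ℕ) : ℝ) ^ (1 - q)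
            ≤ ∑ j ∈ Finset.range n, (2 / min 1 (q - 2)) * (g j - g (j + 1)) :=
              Finset.sum_le_sum (fun j _ => hkey j)
          _ = (2 / min 1 (q - 2)) * (g 0 - g n) := by
              rw [← Finset.mul_sum, Finset.sum_range_sub' g]
          _ ≤ (2 / min 1 (q - 2)) * (g 0) := by
              have : (0:ℝ) ≤ g n := Real.rpow_nonneg (by positivity) _
              nlinarith
          _ = (2 / min 1 (q - 2)) * ((N : ℝ) ^ (2 - q)) := by
              simp [hg]


/-- If `E[V^q] < ∞` for some `q > 2`, then `E[κ(V)] = O(s^{q/(q-1)})` as the scale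
`s → ∞`, where `κ(V)` is the first index after which `V (n+1) ≤ n (μ - ε) / s`. -/
theorem stmt9 {Ω : Type*} [MeasureSpace Ω] [IsProbabilityMeasure (ℙ : Measure Ω)]
    (V : ℕ → Ω → ℝ) (hmeas : ∀ n, Measurable (V n))
    (hnonneg : ∀ n ω, 0 ≤ V n ω)
    (hindep : iIndepFun V ℙ)
    (hident : ∀ n, Measure.map (V n) ℙ = Measure.map (V 1) ℙ)
    (q : ℝ) (hq : 2 < q) (hmom : Integrable (fun ω => V 1 ω ^ q) ℙ)
    (μ ε : ℝ) (h : 0 < μ - ε)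
    (κ : ℝ → Ω → ℕ∞)
    (hκ : ∀ s ω, κ s ω = sInf {x : ℕ∞ | ∃ k : ℕ, x = (k : ℕ∞) ∧ 1 ≤ k ∧
      ∀ n ≥ k, V (n + 1) ω ≤ (n : ℝ) * (μ - ε) / s}) :
    ∃ C : ℝ, 0 < C ∧ ∃ s0 : ℝ, ∀ s : ℝ, s0 ≤ s →
      ∫⁻ ω, (κ s ω : ℝ≥0∞) ∂ℙ ≤ ENNReal.ofReal (C * s ^ (q / (q - 1))) := by
  have hq0 : (0:ℝ) < q := by linarith
  have hq1 : (0:ℝ) < q - 1 := by linarith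
  have hc : (0:ℝ) < μ - ε := h
  set c : ℝ := μ - ε with hcdef
  -- the moment
  set M : ℝ≥0∞ := ∫⁻ ω, ENNReal.ofReal (V 1 ω ^ q) ∂ℙ with hMdef
  have hMne : M ≠ ⊤ := by
    have h1 : ∀ ω : Ω, ENNReal.ofReal (V 1 ω ^ q) = ‖V 1 ω ^ q‖ₑ :=
      fun ω => (Real.enorm_eq_ofReal (Real.rpow_nonneg (hnonneg 1 ω) q)).symm
    rw [hMdef]
    simp_rw [h1]
    exact hmom.hasFiniteIntegral.ne
  -- Markov inequality
  have markov : ∀ t : ℝ, 0 < t → ℙ {ω : Ω | t < V 1 ω} ≤ M / ENNReal.ofReal (t ^ q) := by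
    intro t ht
    have hfm : AEMeasurable (fun ω => ENNReal.ofReal (V 1 ω ^ q)) ℙ :=
      (((Real.continuous_rpow_const hq0.le).measurable.comp (hmeas 1)).ennreal_ofReal).aemeasurable
    have h1 := mul_meas_ge_le_lintegral₀ hfm (ENNReal.ofReal (t ^ q))
    have hsub : {ω : Ω | t < V 1 ω} ⊆
        {ω : Ω | ENNReal.ofReal (t ^ q) ≤ ENNReal.ofReal (V 1 ω ^ q)} :=
      fun ω hw => ENNReal.ofReal_le_ofReal (Real.rpow_le_rpow ht.le (le_of_lt hw) hq0.le)
    have h2 : ENNReal.ofReal (t ^ q) * ℙ {ω : Ω | t < V 1 ω} ≤ M :=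
      le_trans (mul_le_mul_right (measure_mono hsub) _) h1
    rw [ENNReal.le_div_iff_mul_le
      (Or.inl (ENNReal.ofReal_pos.mpr (Real.rpow_pos_of_pos ht q)).ne')
      (Or.inl ENNReal.ofReal_ne_top)]
    rwa [mul_comm]
  -- identical distribution
  have ident : ∀ (n : ℕ) (t : ℝ), ℙ {ω : Ω | t < V (n + 1) ω} = ℙ {ω : Ω | t < V 1 ω} := by
    intro n t
    have e1 : {ω : Ω | t < V (n + 1) ω} = V (n + 1) ⁻¹' Set.Ioi t := rfl
    have e2 : {ω : Ω | t < V 1 ω} = V 1 ⁻¹' Set.Ioi t := rfl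
    rw [e1, e2, ← Measure.map_apply (hmeas (n + 1)) measurableSet_Ioi,
      ← Measure.map_apply (hmeas 1) measurableSet_Ioi, hident (n + 1)]
  -- the constant
  set C1 : ℝ := 2 / min 1 (q - 2) with hC1def
  have hmin : 0 < min 1 (q - 2) := lt_min one_pos (by linarith)
  have hC1 : 0 < C1 := by positivity
  set a : ℝ := q / (q - 1) with hadef
  have ha : 0 < a := div_pos hq0 hq1
  have hcq : (0:ℝ) < c ^ q := Real.rpow_pos_of_pos hc q
  refine ⟨3 + M.toReal * C1 / c ^ q, by positivity, 1, fun s hs => ?_⟩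
  have hs0 : (0:ℝ) < s := lt_of_lt_of_le one_pos hs
  -- events
  set A : ℕ → Set Ω := fun k => {ω : Ω | (k : ℕ∞) < κ s ω} with hAdef
  have hAeq : ∀ k : ℕ, A k =
      ⋂ j ∈ Set.Icc 1 k, ⋃ n : ℕ, {ω : Ω | j ≤ n ∧ (n : ℝ) * c / s < V (n + 1) ω} := by
    intro k
    ext ω
    simp only [hAdef, Set.mem_setOf_eq, Set.mem_iInter, Set.mem_iUnion, Set.mem_Icc]
    rw [hκ s ω]
    constructor
    · rintro hlt j ⟨h1, hjk⟩
      by_contra hcon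
      push_neg at hcon
      have hmem : (j : ℕ∞) ∈ {x : ℕ∞ | ∃ k : ℕ, x = (k : ℕ∞) ∧ 1 ≤ k ∧
          ∀ n ≥ k, V (n + 1) ω ≤ (n : ℝ) * (μ - ε) / s} :=
        ⟨j, rfl, h1, fun n hn => hcon n hn⟩
      have hle : sInf {x : ℕ∞ | ∃ k : ℕ, x = (k : ℕ∞) ∧ 1 ≤ k ∧
          ∀ n ≥ k, V (n + 1) ω ≤ (n : ℝ) * (μ - ε) / s} ≤ (j : ℕ∞) := sInf_le hmem
      have : (k : ℕ∞) < (j : ℕ∞) := lt_of_lt_of_le hlt hle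
      have : k < j := by exact_mod_cast this
      omega
    · intro hall
      refine lt_of_lt_of_le (b := (((k + 1 : ℕ)) : ℕ∞)) ?_ (le_sInf ?_)
      · exact_mod_cast Nat.lt_succ_self k
      · rintro x ⟨j, rfl, h1, hj⟩
        have hkj : k < j := by
          by_contra hcon
          push_neg at hcon
          obtain ⟨n, hn, hV⟩ := hall j ⟨h1, hcon⟩
          exact absurd (hj n hn) (not_le.mpr hV)
        exact_mod_cast Nat.succ_le_of_lt hkj
  have hAmeas : ∀ k : ℕ, MeasurableSet (A k) := by
    intro k
    rw [hAeq k]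
    refine MeasurableSet.biInter (Set.to_countable _) (fun j _ => MeasurableSet.iUnion (fun n => ?_))
    by_cases hj : j ≤ n
    · have : {ω : Ω | j ≤ n ∧ (n : ℝ) * c / s < V (n + 1) ω}
          = {ω : Ω | (n : ℝ) * c / s < V (n + 1) ω} := by ext ω; simp [hj]
      rw [this]
      exact measurableSet_lt measurable_const (hmeas (n + 1))
    · have : {ω : Ω | j ≤ n ∧ (n : ℝ) * c / s < V (n + 1) ω} = ∅ := by ext ω; simp [hj]
      rw [this]; exact MeasurableSet.empty
  -- the tail probability bound
  set D : ℕ → ℝ≥0∞ := fun n => M / ENNReal.ofReal (((n : ℝ) * c / s) ^ q) with hDdef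
  have hbound : ∀ m : ℕ, 1 ≤ m → ℙ (A m) ≤ ∑' n : ℕ, (if m ≤ n then D n else 0) := by
    intro m hm
    have hsub : A m ⊆ ⋃ n : ℕ, {ω : Ω | m ≤ n ∧ (n : ℝ) * c / s < V (n + 1) ω} := by
      rw [hAeq m]
      exact Set.biInter_subset_of_mem (Set.mem_Icc.mpr ⟨hm, le_refl m⟩)
    calc ℙ (A m) ≤ ℙ (⋃ n : ℕ, {ω : Ω | m ≤ n ∧ (n : ℝ) * c / s < V (n + 1) ω}) :=
          measure_mono hsub
      _ ≤ ∑' n : ℕ, ℙ {ω : Ω | m ≤ n ∧ (n : ℝ) * c / s < V (n + 1) ω} := measure_iUnion_le _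
      _ ≤ ∑' n : ℕ, (if m ≤ n then D n else 0) := by
          apply ENNReal.tsum_le_tsum
          intro n
          by_cases hmn : m ≤ n
          · have e1 : {ω : Ω | m ≤ n ∧ (n : ℝ) * c / s < V (n + 1) ω}
                = {ω : Ω | (n : ℝ) * c / s < V (n + 1) ω} := by ext ω; simp [hmn]
            have hnpos : (0:ℝ) < (n : ℝ) := by
              have : 1 ≤ n := le_trans hm hmn
              exact_mod_cast Nat.lt_of_lt_of_le Nat.zero_lt_one this
            have ht : (0:ℝ) < (n : ℝ) * c / s := by positivity
            rw [e1, if_pos hmn, ident n]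
            exact markov _ ht
          · have e1 : {ω : Ω | m ≤ n ∧ (n : ℝ) * c / s < V (n + 1) ω} = ∅ := by
              ext ω; simp [hmn]
            rw [e1, if_neg hmn]
            simp
  -- the threshold
  set K : ℕ := ⌈s ^ a⌉₊ with hKdef
  have hsa1 : (1:ℝ) ≤ s ^ a := by
    calc (1:ℝ) = 1 ^ a := (Real.one_rpow a).symm
    _ ≤ s ^ a := Real.rpow_le_rpow (by norm_num) hs ha.le
  have hsa0 : (0:ℝ) < s ^ a := lt_of_lt_of_le one_pos hsa1
  have hKge : (s ^ a : ℝ) ≤ (K : ℝ) := Nat.le_ceil _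
  have hKle : ((K : ℝ)) < s ^ a + 1 := Nat.ceil_lt_add_one hsa0.le
  -- first chain: integral to sum of probabilities
  have step1 : ∫⁻ ω, (κ s ω : ℝ≥0∞) ∂ℙ ≤ ∑' k : ℕ, ℙ (A k) := by
    have ptwise : ∀ ω : Ω, (κ s ω : ℝ≥0∞) ≤
        ∑' k : ℕ, (A k).indicator (fun _ => (1 : ℝ≥0∞)) ω := by
      intro ω
      have e : ∀ k : ℕ, (A k).indicator (fun _ => (1 : ℝ≥0∞)) ω
          = (if (k : ℕ∞) < κ s ω then (1:ℝ≥0∞) else 0) := by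
        intro k
        rw [Set.indicator_apply]
        rfl
      rw [tsum_congr e]
      exact stmt9_coe_le (κ s ω)
    calc ∫⁻ ω, (κ s ω : ℝ≥0∞) ∂ℙ
        ≤ ∫⁻ ω, ∑' k : ℕ, (A k).indicator (fun _ => (1 : ℝ≥0∞)) ω ∂ℙ := lintegral_mono ptwise
      _ = ∑' k : ℕ, ∫⁻ ω, (A k).indicator (fun _ => (1 : ℝ≥0∞)) ω ∂ℙ :=
          lintegral_tsum (fun k => (measurable_const.indicator (hAmeas k)).aemeasurable)
      _ = ∑' k : ℕ, ℙ (A k) := tsum_congr (fun k => lintegral_indicator_one (hAmeas k))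
  -- splitting
  have step2 : ∑' k : ℕ, ℙ (A k)
      = ∑ k ∈ Finset.range (K + 1), ℙ (A k) + ∑' k : ℕ, ℙ (A (k + (K + 1))) :=
    (HasSum.sum_range_add (ENNReal.summable.hasSum)).tsum_eq
  have step3 : ∑ k ∈ Finset.range (K + 1), ℙ (A k) ≤ ((K : ℝ≥0∞) + 1) := by
    calc ∑ k ∈ Finset.range (K + 1), ℙ (A k) ≤ ∑ _k ∈ Finset.range (K + 1), (1:ℝ≥0∞) :=
          Finset.sum_le_sum (fun k _ => prob_le_one)
      _ = ((K : ℝ≥0∞) + 1) := by simp [mul_comm]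
  -- tail estimation
  have step4 : ∑' k : ℕ, ℙ (A (k + (K + 1)))
      ≤ M * (ENNReal.ofReal ((s / c) ^ q) * ENNReal.ofReal (C1 * ((K + 1 : ℕ) : ℝ) ^ (2 - q))) := by
    have termeq : ∀ j : ℕ, ((j + (K + 1) : ℕ) : ℝ≥0∞) * D (j + (K + 1))
        = M * (ENNReal.ofReal ((s / c) ^ q)
            * ENNReal.ofReal (((j + (K + 1) : ℕ) : ℝ) ^ (1 - q))) := by
      intro j
      set n : ℕ := j + (K + 1) with hn
      have hnpos : (0:ℝ) < (n : ℝ) := by positivity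
      have ht : (0:ℝ) < (n : ℝ) * c / s := by positivity
      have htq : (0:ℝ) < ((n : ℝ) * c / s) ^ q := Real.rpow_pos_of_pos ht q
      calc ((n : ℕ) : ℝ≥0∞) * D n
          = M * (((n : ℕ) : ℝ≥0∞) * (ENNReal.ofReal (((n : ℝ) * c / s) ^ q))⁻¹) := by
            simp only [hDdef]; rw [ENNReal.div_eq_inv_mul]; ring
        _ = M * (ENNReal.ofReal ((n:ℝ)) * ENNReal.ofReal ((((n : ℝ) * c / s) ^ q)⁻¹)) := by
            rw [ENNReal.ofReal_natCast, ENNReal.ofReal_inv_of_pos htq]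
        _ = M * ENNReal.ofReal ((n:ℝ) * ((((n : ℝ) * c / s) ^ q)⁻¹)) := by
            rw [ENNReal.ofReal_mul (Nat.cast_nonneg n)]
        _ = M * ENNReal.ofReal ((s / c) ^ q * (n:ℝ) ^ (1 - q)) := by
            rw [stmt9_real_id hc hs0 hnpos q]
        _ = M * (ENNReal.ofReal ((s / c) ^ q)
              * ENNReal.ofReal (((n : ℕ) : ℝ) ^ (1 - q))) := by
            rw [ENNReal.ofReal_mul (Real.rpow_nonneg (by positivity) q)]
    calc ∑' k : ℕ, ℙ (A (k + (K + 1)))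
        ≤ ∑' k : ℕ, ∑' n : ℕ, (if k + (K + 1) ≤ n then D n else 0) :=
          ENNReal.tsum_le_tsum (fun k => hbound (k + (K + 1)) (by omega))
      _ = ∑' n : ℕ, ∑' k : ℕ, (if k + (K + 1) ≤ n then D n else 0) := ENNReal.tsum_comm
      _ ≤ ∑' n : ℕ, (if K + 1 ≤ n then (n : ℝ≥0∞) * D n else 0) :=
          ENNReal.tsum_le_tsum (fun n => stmt9_inner_count K n (D n))
      _ = ∑' j : ℕ, ((j + (K + 1) : ℕ) : ℝ≥0∞) * D (j + (K + 1)) := by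
          have hsplit := (HasSum.sum_range_add
            (f := fun n : ℕ => if K + 1 ≤ n then (n : ℝ≥0∞) * D n else 0) (k := K + 1)
            (ENNReal.summable.hasSum)).tsum_eq
          rw [hsplit, Finset.sum_eq_zero
            (fun n hn => if_neg (by simp only [Finset.mem_range] at hn; omega)), zero_add]
          refine tsum_congr (fun j => ?_)
          have hcond : K + 1 ≤ j + (K + 1) := by omega
          simp only [hcond, if_true]
      _ ≤ ∑' j : ℕ, M * (ENNReal.ofReal ((s / c) ^ q)
            * ENNReal.ofReal (((j + (K + 1) : ℕ) : ℝ) ^ (1 - q))) := by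
          apply ENNReal.tsum_le_tsum
          intro j
          rw [termeq j]
      _ = M * (ENNReal.ofReal ((s / c) ^ q)
            * ∑' j : ℕ, ENNReal.ofReal (((j + (K + 1) : ℕ) : ℝ) ^ (1 - q))) := by
          rw [ENNReal.tsum_mul_left, ENNReal.tsum_mul_left]
      _ ≤ M * (ENNReal.ofReal ((s / c) ^ q)
            * ENNReal.ofReal (C1 * (((K + 1 : ℕ)) : ℝ) ^ (2 - q))) := by
          exact mul_le_mul_right (mul_le_mul_right (stmt9_tail hq (K + 1) (by omega)) _) _
  -- combine
  have hKRpos : (0:ℝ) < ((K + 1 : ℕ) : ℝ) := by positivity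
  have hrpnn : (0:ℝ) ≤ ((K + 1 : ℕ) : ℝ) ^ (2 - q) := Real.rpow_nonneg hKRpos.le _
  have hscq : (0:ℝ) ≤ (s / c) ^ q := Real.rpow_nonneg (by positivity) _
  have combine : ∫⁻ ω, (κ s ω : ℝ≥0∞) ∂ℙ
      ≤ ENNReal.ofReal (((K + 1 : ℕ) : ℝ))
        + ENNReal.ofReal (M.toReal * ((s / c) ^ q * (C1 * (((K + 1 : ℕ)) : ℝ) ^ (2 - q)))) := by
    calc ∫⁻ ω, (κ s ω : ℝ≥0∞) ∂ℙ
        ≤ ((K : ℝ≥0∞) + 1) + M * (ENNReal.ofReal ((s / c) ^ q)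
            * ENNReal.ofReal (C1 * (((K + 1 : ℕ)) : ℝ) ^ (2 - q))) := by
          refine step1.trans ?_
          rw [step2]
          exact add_le_add step3 step4
      _ = ENNReal.ofReal (((K + 1 : ℕ) : ℝ))
          + ENNReal.ofReal (M.toReal * ((s / c) ^ q
              * (C1 * (((K + 1 : ℕ)) : ℝ) ^ (2 - q)))) := by
          congr 1
          · rw [ENNReal.ofReal_natCast]; push_cast; ring
          · rw [ENNReal.ofReal_mul ENNReal.toReal_nonneg,
              ENNReal.ofReal_mul hscq, ENNReal.ofReal_toReal hMne]
  -- final real inequality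
  have hK1 : ((K + 1 : ℕ) : ℝ) ≤ 3 * s ^ a := by push_cast; nlinarith [hKle, hsa1]
  have hBase : s ^ a ≤ ((K + 1 : ℕ) : ℝ) := by push_cast; linarith [hKge]
  have hrp : ((K + 1 : ℕ) : ℝ) ^ (2 - q) ≤ (s ^ a) ^ (2 - q) :=
    (Real.rpow_le_rpow_iff_of_neg hKRpos hsa0 (by linarith)).mpr hBase
  have hsaq : (s ^ a) ^ (2 - q) = s ^ (a * (2 - q)) := by rw [← Real.rpow_mul hs0.le]
  have hexp : q + a * (2 - q) = a := by rw [hadef]; field_simp; ring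
  have hmulq : s ^ q * s ^ (a * (2 - q)) = s ^ a := by rw [← Real.rpow_add hs0, hexp]
  have hdivq : (s / c) ^ q = s ^ q / c ^ q := Real.div_rpow hs0.le hc.le q
  have hsq : (0:ℝ) < s ^ q := Real.rpow_pos_of_pos hs0 q
  have hMr : (0:ℝ) ≤ M.toReal := ENNReal.toReal_nonneg
  have realineq : ((K + 1 : ℕ) : ℝ)
      + M.toReal * ((s / c) ^ q * (C1 * (((K + 1 : ℕ)) : ℝ) ^ (2 - q)))
      ≤ (3 + M.toReal * C1 / c ^ q) * s ^ a := by
    have h2 : (s ^ q / c ^ q) * (C1 * (((K + 1 : ℕ)) : ℝ) ^ (2 - q))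
        ≤ (s ^ q / c ^ q) * (C1 * s ^ (a * (2 - q))) := by
      apply mul_le_mul_of_nonneg_left _ (by positivity)
      apply mul_le_mul_of_nonneg_left _ hC1.le
      rw [← hsaq]; exact hrp
    have h3 : s ^ q / c ^ q * (C1 * s ^ (a * (2 - q))) = C1 / c ^ q * s ^ a := by
      rw [← hmulq]; field_simp
    have h4 := mul_le_mul_of_nonneg_left h2 hMr
    rw [hdivq]
    calc ((K + 1 : ℕ) : ℝ)
        + M.toReal * (s ^ q / c ^ q * (C1 * (((K + 1 : ℕ)) : ℝ) ^ (2 - q)))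
        ≤ 3 * s ^ a + M.toReal * (C1 / c ^ q * s ^ a) := by
          rw [← h3]; linarith
      _ = (3 + M.toReal * C1 / c ^ q) * s ^ a := by ring
  calc ∫⁻ ω, (κ s ω : ℝ≥0∞) ∂ℙ
      ≤ ENNReal.ofReal (((K + 1 : ℕ) : ℝ))
        + ENNReal.ofReal (M.toReal * ((s / c) ^ q
            * (C1 * (((K + 1 : ℕ)) : ℝ) ^ (2 - q)))) := combine
    _ = ENNReal.ofReal (((K + 1 : ℕ) : ℝ)
          + M.toReal * ((s / c) ^ q * (C1 * (((K + 1 : ℕ)) : ℝ) ^ (2 - q)))) :=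
        (ENNReal.ofReal_add hKRpos.le (by positivity)).symm
    _ ≤ ENNReal.ofReal ((3 + M.toReal * C1 / c ^ q) * s ^ a) :=
        ENNReal.ofReal_le_ofReal realineq
end

section
/- Suppose V is a nonnegative random variable with E[exp(θV)] < ∞ for some θ > 0, and let κ(V) = inf{k ≥ 1 : V_{n+1} ≤ n(μ-ε)/s for all n ≥ k} for i.i.d. copies (V_n). Then E[κ(V)] = O(s log s) as s → ∞. -/
open MeasureTheory ProbabilityTheory Filter Set
open scoped ENNReal NNReal Topology

lemma aux_geom_tail (y : ℝ≥0∞) (j : ℕ) :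
    (∑' n : ℕ, (if j ≤ n then y ^ n else 0)) = y ^ j * (1 - y)⁻¹ := by
  have hinj : Function.Injective (fun m : ℕ => m + j) := add_left_injective j
  have hsupp : Function.support (fun n : ℕ => if j ≤ n then y ^ n else 0) ⊆
      Set.range (fun m : ℕ => m + j) := by
    intro n hn
    by_cases hjn : j ≤ n
    · exact ⟨n - j, by simp [Nat.sub_add_cancel hjn]⟩
    · simp [Function.mem_support, if_neg hjn] at hn
  rw [← hinj.tsum_eq hsupp]
  simp only [le_add_iff_nonneg_left, Nat.zero_le, if_true, pow_add]
  rw [ENNReal.tsum_mul_right, ENNReal.tsum_geometric]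
  ring

lemma aux_pointwise (c s : ℝ) (W : ℕ → ℝ) (k₀ : ℕ) (hk₀ : 1 ≤ k₀) :
    ((sInf {x : ℕ∞ | ∃ k : ℕ, x = (k : ℕ∞) ∧ 1 ≤ k ∧
        ∀ n ≥ k, W (n + 1) ≤ (n : ℝ) * c / s} : ℕ∞) : ℝ≥0∞)
      ≤ k₀ + ∑' k : ℕ, ∑' n : ℕ,
          (if k₀ ≤ k ∧ k ≤ n ∧ (n : ℝ) * c / s < W (n + 1) then (1 : ℝ≥0∞) else 0) := by
  set S := {x : ℕ∞ | ∃ k : ℕ, x = (k : ℕ∞) ∧ 1 ≤ k ∧ ∀ n ≥ k, W (n + 1) ≤ (n : ℝ) * c / s}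
  set T := ∑' k : ℕ, ∑' n : ℕ,
      (if k₀ ≤ k ∧ k ≤ n ∧ (n : ℝ) * c / s < W (n + 1) then (1 : ℝ≥0∞) else 0) with hTdef
  have key : ∀ m : ℕ, (m : ℕ∞) ∈ S → ((m : ℝ≥0∞) ≤ k₀ + T) →
      (((sInf S : ℕ∞)) : ℝ≥0∞) ≤ k₀ + T := by
    intro m hm hle
    refine le_trans ?_ hle
    have h1 : sInf S ≤ (m : ℕ∞) := sInf_le hm
    calc ((sInf S : ℕ∞) : ℝ≥0∞) ≤ (((m : ℕ∞) : ℕ∞) : ℝ≥0∞) := by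
          exact_mod_cast ENat.toENNReal_le.2 h1
      _ = (m : ℝ≥0∞) := by simp
  by_cases hT : T = ⊤
  · rw [hT]; simp
  · set F := {n : ℕ | k₀ ≤ n ∧ (n : ℝ) * c / s < W (n + 1)} with hFdef
    have hinner : (∑' n : ℕ, (if k₀ ≤ k₀ ∧ k₀ ≤ n ∧ (n : ℝ) * c / s < W (n + 1)
        then (1 : ℝ≥0∞) else 0)) ≠ ⊤ := by
      intro habs
      exact hT (top_le_iff.1 (habs ▸ ENNReal.le_tsum k₀))
    have hF : F.Finite := by
      refine Set.Finite.subset (ENNReal.finite_const_le_of_tsum_ne_top hinner one_ne_zero) ?_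
      intro n hn
      simp only [Set.mem_setOf_eq] at hn ⊢
      rw [if_pos ⟨le_refl k₀, hn.1, hn.2⟩]
    by_cases hFe : F.Nonempty
    · have hFe' : hF.toFinset.Nonempty := by
        rwa [Set.Finite.toFinset_nonempty]
      set N := hF.toFinset.max' hFe' with hN
      have hNF : N ∈ F := by
        have := hF.toFinset.max'_mem hFe'
        rwa [Set.Finite.mem_toFinset] at this
      have hNmax : ∀ n ∈ F, n ≤ N := by
        intro n hn
        exact hF.toFinset.le_max' n ((Set.Finite.mem_toFinset hF).2 hn)
      have hk₀N : k₀ ≤ N := hNF.1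
      refine key (N + 1) ?_ ?_
      · refine ⟨N + 1, rfl, by omega, ?_⟩
        intro n hn
        by_contra hlt
        push_neg at hlt
        have hnF : n ∈ F := ⟨by omega, hlt⟩
        have := hNmax n hnF
        omega
      · have hTge : ((N + 1 - k₀ : ℕ) : ℝ≥0∞) ≤ T := by
          have h1 : ∀ k ∈ Finset.Icc k₀ N, (1 : ℝ≥0∞) ≤ ∑' n : ℕ,
              (if k₀ ≤ k ∧ k ≤ n ∧ (n : ℝ) * c / s < W (n + 1) then (1 : ℝ≥0∞) else 0) := by
            intro k hk
            rw [Finset.mem_Icc] at hk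
            have : (if k₀ ≤ k ∧ k ≤ N ∧ (N : ℝ) * c / s < W (N + 1) then (1 : ℝ≥0∞) else 0)
                = 1 := if_pos ⟨hk.1, hk.2, hNF.2⟩
            calc (1 : ℝ≥0∞) = _ := this.symm
              _ ≤ _ := ENNReal.le_tsum N
          calc ((N + 1 - k₀ : ℕ) : ℝ≥0∞) = ∑ _k ∈ Finset.Icc k₀ N, (1 : ℝ≥0∞) := by
                rw [Finset.sum_const, Nat.card_Icc]
                simp [nsmul_eq_mul]
            _ ≤ ∑ k ∈ Finset.Icc k₀ N, ∑' n : ℕ,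
                (if k₀ ≤ k ∧ k ≤ n ∧ (n : ℝ) * c / s < W (n + 1) then (1 : ℝ≥0∞) else 0) :=
                Finset.sum_le_sum h1
            _ ≤ T := ENNReal.sum_le_tsum _
        calc ((N + 1 : ℕ) : ℝ≥0∞) = (k₀ : ℝ≥0∞) + ((N + 1 - k₀ : ℕ) : ℝ≥0∞) := by
              rw [← Nat.cast_add]; congr 1; omega
          _ ≤ k₀ + T := add_le_add_right hTge _
    · refine key k₀ ⟨k₀, rfl, hk₀, ?_⟩ le_self_add
      intro n hn
      by_contra hlt
      push_neg at hlt
      exact hFe ⟨n, hn, hlt⟩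


lemma aux_real_tail (a q M : ℝ) (k₀ : ℕ) (hapos : 0 < a) (hM0 : 0 < M)
    (hq0 : 0 ≤ q) (h1qpos : 0 < 1 - q)
    (hqk : q ^ k₀ ≤ a ^ 2 / (4 * M)) (hinv : (1 - q)⁻¹ ≤ 2 / a) :
    q ^ k₀ * (1 - q)⁻¹ * ((1 - q)⁻¹ * M) ≤ 1 := by
  calc q ^ k₀ * (1 - q)⁻¹ * ((1 - q)⁻¹ * M)
      ≤ (a ^ 2 / (4 * M)) * (2 / a) * ((2 / a) * M) := by
        gcongr <;> positivity
    _ = 1 := by field_simp; ring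

lemma aux_real_final (tc B s L k : ℝ) (htc : 0 < tc) (hB0 : 0 ≤ B) (hs2 : 2 ≤ s)
    (hlogs : 1 ≤ L) (h1 : k < (s / tc) * (B + 2 * L) + 1) :
    k + 1 ≤ ((B + 2) / tc + 1) * s * L := by
  have hspos : (0 : ℝ) < s := by linarith
  have f1 : B + 2 * L ≤ (B + 2) * L := by nlinarith [mul_nonneg hB0 (sub_nonneg.2 hlogs)]
  have f2 : (s / tc) * (B + 2 * L) ≤ (s / tc) * ((B + 2) * L) :=
    mul_le_mul_of_nonneg_left f1 (by positivity)
  have f3 : (2 : ℝ) ≤ s * L := by nlinarith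
  have h4 : (s / tc) * ((B + 2) * L) = (B + 2) / tc * (s * L) := by ring
  nlinarith [f2, f3, h1, h4]

/-- If `E[exp(θ V)] < ∞` for some `θ > 0`, then `E[κ(V)] = O(s log s)` as `s → ∞`. -/
theorem stmt10 {Ω : Type*} [MeasureSpace Ω] [IsProbabilityMeasure (ℙ : Measure Ω)]
    (V : ℕ → Ω → ℝ) (hmeas : ∀ n, Measurable (V n))
    (hnonneg : ∀ n ω, 0 ≤ V n ω)
    (hindep : iIndepFun V ℙ)
    (hident : ∀ n, Measure.map (V n) ℙ = Measure.map (V 1) ℙ)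
    (θ : ℝ) (hθ : 0 < θ) (hmgf : Integrable (fun ω => Real.exp (θ * V 1 ω)) ℙ)
    (μ ε : ℝ) (h : 0 < μ - ε)
    (κ : ℝ → Ω → ℕ∞)
    (hκ : ∀ s ω, κ s ω = sInf {x : ℕ∞ | ∃ k : ℕ, x = (k : ℕ∞) ∧ 1 ≤ k ∧
      ∀ n ≥ k, V (n + 1) ω ≤ (n : ℝ) * (μ - ε) / s}) :
    ∃ C : ℝ, 0 < C ∧ ∃ s0 : ℝ, ∀ s : ℝ, s0 ≤ s →
      ∫⁻ ω, (κ s ω : ℝ≥0∞) ∂ℙ ≤ ENNReal.ofReal (C * s * Real.log s) := by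
  have hc : 0 < μ - ε := h
  have hθc : 0 < θ * (μ - ε) := mul_pos hθ hc
  -- the mgf value
  set M := ∫ ω, Real.exp (θ * V 1 ω) ∂ℙ with hMdef
  have hM1 : (1 : ℝ) ≤ M := by
    have h1 : ∀ ω, (1 : ℝ) ≤ Real.exp (θ * V 1 ω) := fun ω =>
      Real.one_le_exp (mul_nonneg hθ.le (hnonneg 1 ω))
    calc (1 : ℝ) = ∫ _ω, (1 : ℝ) ∂(ℙ : Measure Ω) := by simp
      _ ≤ M := integral_mono (integrable_const 1) hmgf h1
  have hM0 : (0 : ℝ) < M := lt_of_lt_of_le one_pos hM1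
  have hL : ∫⁻ ω, ENNReal.ofReal (Real.exp (θ * V 1 ω)) ∂ℙ = ENNReal.ofReal M :=
    (ofReal_integral_eq_lintegral_ofReal hmgf
      (Filter.Eventually.of_forall fun ω => (Real.exp_pos _).le)).symm
  -- Markov inequality
  have markov : ∀ ν : ℝ, (ℙ : Measure Ω) {ω | ν < V 1 ω}
      ≤ ENNReal.ofReal (Real.exp (-(θ * ν)) * M) := by
    intro ν
    set r : ℝ≥0∞ := ENNReal.ofReal (Real.exp (θ * ν)) with hr
    have hr0 : r ≠ 0 := ne_of_gt (ENNReal.ofReal_pos.2 (Real.exp_pos _))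
    have hrt : r ≠ ⊤ := ENNReal.ofReal_ne_top
    have hsub : {ω : Ω | ν < V 1 ω} ⊆
        {ω : Ω | r ≤ ENNReal.ofReal (Real.exp (θ * V 1 ω))} := by
      intro ω hω
      simp only [Set.mem_setOf_eq] at hω ⊢
      exact ENNReal.ofReal_le_ofReal (Real.exp_le_exp.2
        (mul_le_mul_of_nonneg_left hω.le hθ.le))
    have hmul : r * (ℙ : Measure Ω) {ω | r ≤ ENNReal.ofReal (Real.exp (θ * V 1 ω))}
        ≤ ENNReal.ofReal M := by
      rw [← hL]
      exact mul_meas_ge_le_lintegral₀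
        ((Real.measurable_exp.comp ((hmeas 1).const_mul θ)).ennreal_ofReal).aemeasurable r
    calc (ℙ : Measure Ω) {ω | ν < V 1 ω}
        ≤ (ℙ : Measure Ω) {ω | r ≤ ENNReal.ofReal (Real.exp (θ * V 1 ω))} :=
          measure_mono hsub
      _ = r⁻¹ * (r * (ℙ : Measure Ω) {ω | r ≤ ENNReal.ofReal (Real.exp (θ * V 1 ω))}) := by
          rw [← mul_assoc, ENNReal.inv_mul_cancel hr0 hrt, one_mul]
      _ ≤ r⁻¹ * ENNReal.ofReal M := mul_le_mul_right hmul _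
      _ = ENNReal.ofReal (Real.exp (-(θ * ν)) * M) := by
          rw [hr, ← ENNReal.ofReal_inv_of_pos (Real.exp_pos _), ← Real.exp_neg,
            ← ENNReal.ofReal_mul (Real.exp_pos _).le]
  -- identical distribution
  have hfail : ∀ (n : ℕ) (ν : ℝ), (ℙ : Measure Ω) {ω | ν < V n ω}
      = (ℙ : Measure Ω) {ω | ν < V 1 ω} := by
    intro n ν
    have h1 : {ω : Ω | ν < V n ω} = V n ⁻¹' Set.Ioi ν := rfl
    have h2 : {ω : Ω | ν < V 1 ω} = V 1 ⁻¹' Set.Ioi ν := rfl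
    rw [h1, h2, ← Measure.map_apply (hmeas n) measurableSet_Ioi,
      ← Measure.map_apply (hmeas 1) measurableSet_Ioi, hident n]
  -- constants
  have h2e : (2 : ℝ) ≤ Real.exp 1 := by nlinarith [Real.add_one_le_exp (1 : ℝ)]
  set B := max (Real.log (4 * M) - 2 * Real.log (θ * (μ - ε))) 0 with hBdef
  have hB0 : 0 ≤ B := le_max_right _ _
  set C := (B + 2) / (θ * (μ - ε)) + 1 with hCdef
  have hCpos : 0 < C := by positivity
  refine ⟨C, hCpos, max (Real.exp 1) (θ * (μ - ε)), ?_⟩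
  intro s hs
  have hse : Real.exp 1 ≤ s := le_trans (le_max_left _ _) hs
  have hsa : θ * (μ - ε) ≤ s := le_trans (le_max_right _ _) hs
  have hs2 : (2 : ℝ) ≤ s := le_trans h2e hse
  have hs1 : (1 : ℝ) < s := lt_of_lt_of_le one_lt_two hs2
  have hspos : (0 : ℝ) < s := lt_trans one_pos hs1
  have hlogs : (1 : ℝ) ≤ Real.log s := by
    rw [Real.le_log_iff_exp_le hspos]; exact hse
  set a := θ * (μ - ε) / s with hadef
  have hapos : 0 < a := div_pos hθc hspos
  have ha1 : a ≤ 1 := by rw [hadef, div_le_one hspos]; exact hsa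
  set q := Real.exp (-a) with hqdef
  have hq0 : 0 ≤ q := (Real.exp_pos _).le
  have hq1 : q < 1 := Real.exp_lt_one_iff.2 (neg_lt_zero.2 hapos)
  have h1q : a / 2 ≤ 1 - q := by
    have he : a + 1 ≤ Real.exp a := Real.add_one_le_exp a
    have hqe : q * Real.exp a = 1 := by
      rw [hqdef, ← Real.exp_add]; simp
    nlinarith [mul_le_mul_of_nonneg_left he hq0]
  have h1qpos : 0 < 1 - q := by linarith [hapos]
  set k₀ := ⌈(s / (θ * (μ - ε))) * (B + 2 * Real.log s)⌉₊ with hk₀def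
  have hxpos : 0 < (s / (θ * (μ - ε))) * (B + 2 * Real.log s) := by
    apply mul_pos (div_pos hspos hθc); nlinarith
  have hk₀1 : 1 ≤ k₀ := Nat.ceil_pos.2 hxpos
  -- the dominating function
  set g : ℕ → ℕ → Ω → ℝ≥0∞ := fun k n =>
    Set.indicator {ω' : Ω | (n : ℝ) * (μ - ε) / s < V (n + 1) ω'}
      (fun _ => if k₀ ≤ k ∧ k ≤ n then (1 : ℝ≥0∞) else 0) with hgdef
  have hgeq : ∀ k n ω, g k n ω
      = (if k₀ ≤ k ∧ k ≤ n ∧ (n : ℝ) * (μ - ε) / s < V (n + 1) ω then (1 : ℝ≥0∞) else 0) := by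
    intro k n ω
    simp only [hgdef, Set.indicator, Set.mem_setOf_eq]
    split_ifs with h1 h2 h3 h4 h5 <;> tauto
  have hmset : ∀ n : ℕ, MeasurableSet {ω' : Ω | (n : ℝ) * (μ - ε) / s < V (n + 1) ω'} :=
    fun n => (hmeas (n + 1)) measurableSet_Ioi
  have hgmeas : ∀ k n, Measurable (g k n) := by
    intro k n
    exact Measurable.indicator measurable_const (hmset n)
  -- pointwise bound
  have hpt : ∀ ω, (κ s ω : ℝ≥0∞) ≤ (k₀ : ℝ≥0∞) + ∑' k : ℕ, ∑' n : ℕ, g k n ω := by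
    intro ω
    rw [hκ s ω]
    have := aux_pointwise (μ - ε) s (fun n => V n ω) k₀ hk₀1
    refine le_trans this (le_of_eq ?_)
    congr 1
    exact tsum_congr fun k => tsum_congr fun n => (hgeq k n ω).symm
  -- integrate
  have hint : ∫⁻ ω, (κ s ω : ℝ≥0∞) ∂ℙ
      ≤ (k₀ : ℝ≥0∞) + ∑' k : ℕ, ∑' n : ℕ, ∫⁻ ω, g k n ω ∂ℙ := by
    calc ∫⁻ ω, (κ s ω : ℝ≥0∞) ∂ℙ
        ≤ ∫⁻ ω, ((k₀ : ℝ≥0∞) + ∑' k : ℕ, ∑' n : ℕ, g k n ω) ∂ℙ := lintegral_mono hpt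
      _ = (k₀ : ℝ≥0∞) + ∫⁻ ω, (∑' k : ℕ, ∑' n : ℕ, g k n ω) ∂ℙ := by
          rw [lintegral_add_left measurable_const, lintegral_const, measure_univ, mul_one]
      _ = (k₀ : ℝ≥0∞) + ∑' k : ℕ, ∑' n : ℕ, ∫⁻ ω, g k n ω ∂ℙ := by
          rw [lintegral_tsum fun k => (Measurable.ennreal_tsum
            fun n => hgmeas k n).aemeasurable]
          congr 1
          exact tsum_congr fun k => lintegral_tsum fun n => (hgmeas k n).aemeasurable
  -- bound each integral
  set y := ENNReal.ofReal q with hydef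
  have hgle : ∀ k n, ∫⁻ ω, g k n ω ∂ℙ
      ≤ (if k₀ ≤ k ∧ k ≤ n then y ^ n * ENNReal.ofReal M else 0) := by
    intro k n
    have hexpn : Real.exp (-(θ * ((n : ℝ) * (μ - ε) / s))) = q ^ n := by
      rw [hqdef, ← Real.exp_nat_mul]
      congr 1
      rw [hadef]
      ring
    have hPn : (ℙ : Measure Ω) {ω' : Ω | (n : ℝ) * (μ - ε) / s < V (n + 1) ω'}
        ≤ ENNReal.ofReal (q ^ n * M) := by
      rw [hfail (n + 1) _]
      refine le_trans (markov _) (le_of_eq ?_)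
      rw [hexpn]
    simp only [hgdef]
    rw [lintegral_indicator_const (hmset n)]
    by_cases hcond : k₀ ≤ k ∧ k ≤ n
    · rw [if_pos hcond, if_pos hcond, one_mul]
      refine le_trans hPn (le_of_eq ?_)
      rw [ENNReal.ofReal_mul (pow_nonneg hq0 n), ENNReal.ofReal_pow hq0]
    · rw [if_neg hcond, if_neg hcond, zero_mul]
  -- sum the geometric series
  have hsum : ∑' k : ℕ, ∑' n : ℕ, ∫⁻ ω, g k n ω ∂ℙ
      ≤ y ^ k₀ * (1 - y)⁻¹ * ((1 - y)⁻¹ * ENNReal.ofReal M) := by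
    have hinner : ∀ k : ℕ, ∑' n : ℕ, ∫⁻ ω, g k n ω ∂ℙ
        ≤ (if k₀ ≤ k then y ^ k * ((1 - y)⁻¹ * ENNReal.ofReal M) else 0) := by
      intro k
      by_cases hk : k₀ ≤ k
      · rw [if_pos hk]
        calc ∑' n : ℕ, ∫⁻ ω, g k n ω ∂ℙ
            ≤ ∑' n : ℕ, (if k₀ ≤ k ∧ k ≤ n then y ^ n * ENNReal.ofReal M else 0) :=
              ENNReal.tsum_le_tsum (hgle k)
          _ = ∑' n : ℕ, (if k ≤ n then y ^ n else 0) * ENNReal.ofReal M := by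
              refine tsum_congr fun n => ?_
              by_cases hkn : k ≤ n
              · rw [if_pos ⟨hk, hkn⟩, if_pos hkn]
              · rw [if_neg (fun hc => hkn hc.2), if_neg hkn, zero_mul]
          _ = y ^ k * ((1 - y)⁻¹ * ENNReal.ofReal M) := by
              rw [ENNReal.tsum_mul_right, aux_geom_tail]; ring
      · rw [if_neg hk]
        refine le_of_eq ((ENNReal.summable.tsum_eq_zero_iff).2 fun n => ?_)
        refine le_antisymm ?_ zero_le
        refine le_trans (hgle k n) (le_of_eq ?_)
        rw [if_neg (fun hc => hk hc.1)]
    calc ∑' k : ℕ, ∑' n : ℕ, ∫⁻ ω, g k n ω ∂ℙ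
        ≤ ∑' k : ℕ, (if k₀ ≤ k then y ^ k * ((1 - y)⁻¹ * ENNReal.ofReal M) else 0) :=
          ENNReal.tsum_le_tsum hinner
      _ = (∑' k : ℕ, (if k₀ ≤ k then y ^ k else 0)) * ((1 - y)⁻¹ * ENNReal.ofReal M) := by
          rw [← ENNReal.tsum_mul_right]
          refine tsum_congr fun k => ?_
          by_cases hk : k₀ ≤ k
          · rw [if_pos hk, if_pos hk]
          · rw [if_neg hk, if_neg hk, zero_mul]
      _ = y ^ k₀ * (1 - y)⁻¹ * ((1 - y)⁻¹ * ENNReal.ofReal M) := by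
          rw [aux_geom_tail]
  -- the tail is at most 1
  have htail : y ^ k₀ * (1 - y)⁻¹ * ((1 - y)⁻¹ * ENNReal.ofReal M) ≤ 1 := by
    have h1y : (1 : ℝ≥0∞) - y = ENNReal.ofReal (1 - q) := by
      rw [ENNReal.ofReal_sub 1 hq0, ENNReal.ofReal_one, hydef]
    have hall : y ^ k₀ * (1 - y)⁻¹ * ((1 - y)⁻¹ * ENNReal.ofReal M)
        = ENNReal.ofReal (q ^ k₀ * (1 - q)⁻¹ * ((1 - q)⁻¹ * M)) := by
      rw [h1y, ← ENNReal.ofReal_inv_of_pos h1qpos, hydef, ← ENNReal.ofReal_pow hq0,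
        ← ENNReal.ofReal_mul (by positivity), ← ENNReal.ofReal_mul (by positivity),
        ← ENNReal.ofReal_mul (by positivity)]
    rw [hall, ← ENNReal.ofReal_one]
    apply ENNReal.ofReal_le_ofReal
    -- real arithmetic
    have hak : B + 2 * Real.log s ≤ a * k₀ := by
      have h1 : (s / (θ * (μ - ε))) * (B + 2 * Real.log s) ≤ (k₀ : ℝ) := Nat.le_ceil _
      have h2 : a * ((s / (θ * (μ - ε))) * (B + 2 * Real.log s)) = B + 2 * Real.log s := by
        rw [hadef, ← mul_assoc, div_mul_div_comm, mul_comm (θ * (μ - ε)) s,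
          div_self (by positivity : s * (θ * (μ - ε)) ≠ 0), one_mul]
      calc B + 2 * Real.log s = a * ((s / (θ * (μ - ε))) * (B + 2 * Real.log s)) := h2.symm
        _ ≤ a * k₀ := mul_le_mul_of_nonneg_left h1 hapos.le
    have hexp : 4 * M / a ^ 2 ≤ Real.exp (a * k₀) := by
      have h3 : Real.log (4 * M / a ^ 2) ≤ a * k₀ := by
        rw [Real.log_div (by positivity) (by positivity), Real.log_pow,
          Real.log_mul (by norm_num) hM0.ne']
        have h4 : Real.log a = Real.log (θ * (μ - ε)) - Real.log s := by
          rw [hadef, Real.log_div hθc.ne' hspos.ne']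
        rw [h4]
        have h5 : Real.log (4 * M) - 2 * Real.log (θ * (μ - ε)) ≤ B := le_max_left _ _
        rw [Real.log_mul (by norm_num) hM0.ne'] at h5
        push_cast
        nlinarith [hak]
      calc 4 * M / a ^ 2 = Real.exp (Real.log (4 * M / a ^ 2)) :=
            (Real.exp_log (by positivity)).symm
        _ ≤ Real.exp (a * k₀) := Real.exp_le_exp.2 h3
    have hqk : q ^ k₀ ≤ a ^ 2 / (4 * M) := by
      have hq' : q ^ k₀ = (Real.exp (a * k₀))⁻¹ := by
        rw [hqdef, ← Real.exp_nat_mul, ← Real.exp_neg]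
        congr 1; ring
      rw [hq', show a ^ 2 / (4 * M) = (4 * M / a ^ 2)⁻¹ by rw [inv_div]]
      exact inv_anti₀ (by positivity) hexp
    have hinv : (1 - q)⁻¹ ≤ 2 / a := by
      rw [show (2 : ℝ) / a = (a / 2)⁻¹ by rw [inv_div]]
      exact inv_anti₀ (by positivity) h1q
    exact aux_real_tail a q M k₀ hapos hM0 hq0 h1qpos hqk hinv
  -- final assembly
  have hfinal1 : ∫⁻ ω, (κ s ω : ℝ≥0∞) ∂ℙ ≤ (k₀ : ℝ≥0∞) + 1 :=
    hint.trans (add_le_add_right (hsum.trans htail) _)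
  refine hfinal1.trans ?_
  have hcast : (k₀ : ℝ≥0∞) + 1 = ENNReal.ofReal ((k₀ : ℝ) + 1) := by
    rw [ENNReal.ofReal_add (Nat.cast_nonneg _) zero_le_one, ENNReal.ofReal_natCast,
      ENNReal.ofReal_one]
  rw [hcast]
  apply ENNReal.ofReal_le_ofReal
  have h1 : (k₀ : ℝ) < (s / (θ * (μ - ε))) * (B + 2 * Real.log s) + 1 :=
    Nat.ceil_lt_add_one hxpos.le
  rw [hCdef]
  exact aux_real_final (θ * (μ - ε)) B s (Real.log s) k₀ hθc hB0 hs2 hlogs h1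
end
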